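/- arXiv:2506.03060 — 3 statements merged into one kernel-verified Lean document; each statement's English description precedes it below -/
import Mathlib

section
/- Let ρ be a density matrix on a finite-dimensional Hilbert space A, and σ, M positive semidefinite operators on A. Then the fidelity between √M ρ √M and σ is bounded as ||(√M ρ √M)^{1/2} σ^{1/2}||₁² ≤ tr[M σ]. -/
open scoped Kronecker ComplexOrder
open Matrix

attribute [local instance] Classical.propDecidable

noncomputable section

namespace QIT

/-- Apply a real function to a Hermitian matrix via its spectral decomposition
(returns `0` on non-Hermitian input). -/
def mfun {n : Type*} [Fintype n] [DecidableEq n] (A : Matrix n n ℂ) (f : ℝ → ℝ) :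
    Matrix n n ℂ :=
  if hA : A.IsHermitian then
    (hA.eigenvectorUnitary : Matrix n n ℂ) *
      Matrix.diagonal (fun i => (f (hA.eigenvalues i) : ℂ)) *
      star (hA.eigenvectorUnitary : Matrix n n ℂ)
  else 0

/-- Operator power `A ^ p` (via the spectral decomposition, `0 ^ q = 0` for `q ≠ 0`,
so negative powers are taken on the support). -/
def mpow {n : Type*} [Fintype n] [DecidableEq n] (A : Matrix n n ℂ) (p : ℝ) :
    Matrix n n ℂ :=
  mfun A fun x => Real.rpow x p

/-- Operator logarithm (on the support). -/
def mlog {n : Type*} [Fintype n] [DecidableEq n] (A : Matrix n n ℂ) : Matrix n n ℂ :=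
  mfun A Real.log

/-- Positive semidefinite square root. -/
def msqrt {n : Type*} [Fintype n] [DecidableEq n] (A : Matrix n n ℂ) : Matrix n n ℂ :=
  mfun A Real.sqrt

/-- Trace norm `‖A‖₁ = tr √(AᴴA)`. -/
def traceNorm {n : Type*} [Fintype n] [DecidableEq n] (A : Matrix n n ℂ) : ℝ :=
  ((msqrt (Aᴴ * A)).trace).re

/-- Von Neumann entropy `H(ρ) = -tr[ρ log ρ]`. -/
def vnEntropy {n : Type*} [Fintype n] [DecidableEq n] (ρ : Matrix n n ℂ) : ℝ :=
  -(((ρ * mlog ρ).trace).re)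

/-- Umegaki relative entropy `D(ρ‖σ) = tr[ρ (log ρ - log σ)]` if `supp ρ ⊆ supp σ`,
and `+∞` otherwise. -/
def relEntropy {n : Type*} [Fintype n] [DecidableEq n] (ρ σ : Matrix n n ℂ) : EReal :=
  if ∀ x : n → ℂ, σ.mulVec x = 0 → ρ.mulVec x = 0 then
    ((((ρ * (mlog ρ - mlog σ)).trace).re : ℝ) : EReal)
  else ⊤

/-- Fidelity for subnormalized states. -/
def fidelity {n : Type*} [Fintype n] [DecidableEq n] (ρ σ : Matrix n n ℂ) : ℝ :=
  traceNorm (msqrt ρ * msqrt σ) +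
    Real.sqrt ((1 - ρ.trace.re) * (1 - σ.trace.re))

/-- Purified distance. -/
def pdist {n : Type*} [Fintype n] [DecidableEq n] (ρ σ : Matrix n n ℂ) : ℝ :=
  Real.sqrt (1 - fidelity ρ σ ^ 2)

/-- Density matrices. -/
def IsDensity {n : Type*} [Fintype n] (ρ : Matrix n n ℂ) : Prop :=
  ρ.PosSemidef ∧ ρ.trace = 1

/-- Maximum (real) eigenvalue. -/
def lamMax {n : Type*} [Fintype n] [DecidableEq n] (A : Matrix n n ℂ) : ℝ :=
  sSup {t : ℝ | (t : ℂ) ∈ spectrum ℂ A}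

/-- Partial trace over the first tensor factor. -/
def ptraceFst {a b : Type*} [Fintype a] (ρ : Matrix (a × b) (a × b) ℂ) :
    Matrix b b ℂ :=
  Matrix.of fun i j => ∑ k, ρ (k, i) (k, j)

/-- Partial trace over the second tensor factor. -/
def ptraceSnd {a b : Type*} [Fintype b] (ρ : Matrix (a × b) (a × b) ℂ) :
    Matrix a a ℂ :=
  Matrix.of fun i j => ∑ k, ρ (i, k) (j, k)

/-- `id_R ⊗ Φ` applied entrywise (reference system first). -/
def idTens {r a b : Type*} (Φ : Matrix a a ℂ → Matrix b b ℂ)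
    (ρ : Matrix (r × a) (r × a) ℂ) : Matrix (r × b) (r × b) ℂ :=
  Matrix.of fun p q => Φ (Matrix.of fun s t => ρ (p.1, s) (q.1, t)) p.2 q.2

/-- `Φ ⊗ id_R` applied entrywise (reference system second). -/
def tensId {r a b : Type*} (Φ : Matrix a a ℂ → Matrix b b ℂ)
    (ρ : Matrix (a × r) (a × r) ℂ) : Matrix (b × r) (b × r) ℂ :=
  Matrix.of fun p q => Φ (Matrix.of fun s t => ρ (s, p.2) (t, q.2)) p.1 q.1

/-- Tensor product `Φ ⊗ Ψ` of two superoperators. -/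
def tensMap {a b c d : Type*} (Φ : Matrix a a ℂ → Matrix b b ℂ)
    (Ψ : Matrix c c ℂ → Matrix d d ℂ)
    (ρ : Matrix (a × c) (a × c) ℂ) : Matrix (b × d) (b × d) ℂ :=
  Matrix.of fun p q =>
    Φ (Matrix.of fun i j => Ψ (Matrix.of fun s t => ρ (i, s) (j, t)) p.2 q.2) p.1 q.1

/-- Complete positivity. -/
def IsCP {a b : Type*} [Fintype a] [Fintype b]
    (Φ : Matrix a a ℂ → Matrix b b ℂ) : Prop :=
  ∀ (r : ℕ) (ρ : Matrix (Fin r × a) (Fin r × a) ℂ),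
    ρ.PosSemidef → (idTens Φ ρ).PosSemidef

/-- Trace preservation. -/
def IsTP {a b : Type*} [Fintype a] [Fintype b]
    (Φ : Matrix a a ℂ → Matrix b b ℂ) : Prop :=
  ∀ ρ : Matrix a a ℂ, (Φ ρ).trace = ρ.trace

/-- Max-relative entropy `D_max(ρ‖σ) = log inf {t : ρ ≤ t σ}` (`+∞` if infeasible). -/
def Dmax {n : Type*} [Fintype n] (ρ σ : Matrix n n ℂ) : EReal :=
  sInf {x : EReal | ∃ t : ℝ, x = (Real.log t : EReal) ∧ (t • σ - ρ).PosSemidef}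

section AuxLemmas

variable {n : Type*} [Fintype n] [DecidableEq n]

lemma mfun_mul {A : Matrix n n ℂ} (hA : A.IsHermitian) (f g : ℝ → ℝ) :
    mfun A f * mfun A g = mfun A (fun x => f x * g x) := by
  have hU : star (hA.eigenvectorUnitary : Matrix n n ℂ) *
      (hA.eigenvectorUnitary : Matrix n n ℂ) = 1 :=
    Matrix.mem_unitaryGroup_iff'.mp (hA.eigenvectorUnitary).2
  simp only [mfun, dif_pos hA, Matrix.mul_assoc]
  rw [← Matrix.mul_assoc (star _) (hA.eigenvectorUnitary : Matrix n n ℂ), hU, Matrix.one_mul,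
    ← Matrix.mul_assoc (Matrix.diagonal _) (Matrix.diagonal _), Matrix.diagonal_mul_diagonal]
  push_cast
  ring_nf

lemma mfun_isHermitian {A : Matrix n n ℂ} (hA : A.IsHermitian) (f : ℝ → ℝ) :
    (mfun A f).IsHermitian := by
  simp only [mfun, dif_pos hA]
  show _ᴴ = _
  have hd : (Matrix.diagonal (fun i => (f (hA.eigenvalues i) : ℂ)))ᴴ
      = Matrix.diagonal (fun i => (f (hA.eigenvalues i) : ℂ)) := by
    rw [Matrix.diagonal_conjTranspose]
    have : (star fun i => ((f (hA.eigenvalues i) : ℝ) : ℂ))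
        = fun i => ((f (hA.eigenvalues i) : ℝ) : ℂ) :=
      funext fun i => Complex.conj_ofReal _
    rw [this]
  simp only [Matrix.conjTranspose_mul, hd, Matrix.star_eq_conjTranspose,
    Matrix.conjTranspose_conjTranspose, Matrix.mul_assoc]

lemma mfun_congr {A : Matrix n n ℂ} (hA : A.IsHermitian) {f g : ℝ → ℝ}
    (h : ∀ i, f (hA.eigenvalues i) = g (hA.eigenvalues i)) : mfun A f = mfun A g := by
  have he : (fun i => (f (hA.eigenvalues i) : ℂ)) = fun i => (g (hA.eigenvalues i) : ℂ) :=
    funext fun i => by rw [h i]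
  simp only [mfun, dif_pos hA, he]

lemma mfun_id {A : Matrix n n ℂ} (hA : A.IsHermitian) : mfun A (fun x => x) = A := by
  simp only [mfun, dif_pos hA]
  exact hA.spectral_theorem.symm

lemma trace_mfun {A : Matrix n n ℂ} (hA : A.IsHermitian) (f : ℝ → ℝ) :
    (mfun A f).trace = ∑ i, (f (hA.eigenvalues i) : ℂ) := by
  have hU : star (hA.eigenvectorUnitary : Matrix n n ℂ) *
      (hA.eigenvectorUnitary : Matrix n n ℂ) = 1 :=
    Matrix.mem_unitaryGroup_iff'.mp (hA.eigenvectorUnitary).2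
  simp only [mfun, dif_pos hA]
  rw [Matrix.trace_mul_cycle, hU, Matrix.one_mul, Matrix.trace_diagonal]

lemma mfun_posSemidef {A : Matrix n n ℂ} (hA : A.IsHermitian) (f : ℝ → ℝ)
    (hf : ∀ i, 0 ≤ f (hA.eigenvalues i)) : (mfun A f).PosSemidef := by
  simp only [mfun, dif_pos hA]
  have hD : (Matrix.diagonal (fun i => (f (hA.eigenvalues i) : ℂ))).PosSemidef :=
    Matrix.posSemidef_diagonal_iff.mpr fun i => Complex.zero_le_real.mpr (hf i)
  have := hD.mul_mul_conjTranspose_same (hA.eigenvectorUnitary : Matrix n n ℂ)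
  simpa [Matrix.star_eq_conjTranspose] using this

lemma msqrt_isHermitian {A : Matrix n n ℂ} (hA : A.IsHermitian) : (msqrt A).IsHermitian :=
  mfun_isHermitian hA _

lemma msqrt_posSemidef {A : Matrix n n ℂ} (hA : A.PosSemidef) : (msqrt A).PosSemidef :=
  mfun_posSemidef hA.1 _ fun i => Real.sqrt_nonneg _

lemma msqrt_mul_self {A : Matrix n n ℂ} (hA : A.PosSemidef) : msqrt A * msqrt A = A := by
  rw [msqrt, mfun_mul hA.1, mfun_congr hA.1 (g := fun x => x)
    (fun i => Real.mul_self_sqrt (hA.eigenvalues_nonneg i)), mfun_id hA.1]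

lemma trace_re_nonneg {S : Matrix n n ℂ} (hS : S.PosSemidef) : 0 ≤ S.trace.re := by
  have h : ∀ j, 0 ≤ (S j j).re := by
    intro j
    have := hS.re_dotProduct_nonneg (Pi.single j 1)
    simpa [dotProduct, Matrix.mulVec, Pi.single_apply] using this
  simp only [Matrix.trace, Matrix.diag, Complex.re_sum]
  exact Finset.sum_nonneg fun j _ => h j

lemma trace_conjTranspose_mul (X Y : Matrix n n ℂ) :
    (Xᴴ * Y).trace = ∑ p : n × n, (starRingEnd ℂ) (X p.2 p.1) * Y p.2 p.1 := by
  rw [Fintype.sum_prod_type]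
  simp [Matrix.trace, Matrix.mul_apply, Matrix.conjTranspose_apply, Matrix.diag]

lemma trace_conjTranspose_mul_self_re (X : Matrix n n ℂ) :
    (Xᴴ * X).trace.re = ∑ p : n × n, ‖X p.2 p.1‖ ^ 2 := by
  rw [trace_conjTranspose_mul, Complex.re_sum]
  congr 1
  ext p
  rw [mul_comm, Complex.mul_conj]
  simp [Complex.sq_norm]

lemma frob_cs (X Y : Matrix n n ℂ) :
    ‖(Xᴴ * Y).trace‖ ^ 2 ≤ (Xᴴ * X).trace.re * (Yᴴ * Y).trace.re := by
  rw [trace_conjTranspose_mul, trace_conjTranspose_mul_self_re, trace_conjTranspose_mul_self_re]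
  calc ‖∑ p : n × n, (starRingEnd ℂ) (X p.2 p.1) * Y p.2 p.1‖ ^ 2
      ≤ (∑ p : n × n, ‖X p.2 p.1‖ * ‖Y p.2 p.1‖) ^ 2 := by
        apply pow_le_pow_left₀ (norm_nonneg _)
        refine le_trans (norm_sum_le _ _) (le_of_eq ?_)
        congr 1; ext p; simp [_root_.map_mul]
    _ ≤ (∑ p : n × n, ‖X p.2 p.1‖ ^ 2) * ∑ p : n × n, ‖Y p.2 p.1‖ ^ 2 :=
        Finset.sum_mul_sq_le_sq_mul_sq _ _ _


lemma key_trace_bound {ρ C : Matrix n n ℂ} (hρ : ρ.PosSemidef) (htr : ρ.trace = 1) :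
    ((msqrt (C * ρ * Cᴴ)).trace).re ^ 2 ≤ ((Cᴴ * C).trace).re := by
  have hsρh : (msqrt ρ)ᴴ = msqrt ρ := (msqrt_isHermitian hρ.1).eq
  have hsρ2 : msqrt ρ * msqrt ρ = ρ := msqrt_mul_self hρ
  have hB : (C * ρ * Cᴴ).PosSemidef := hρ.mul_mul_conjTranspose_same C
  set B : Matrix n n ℂ := C * ρ * Cᴴ with hBdef
  have hBh : B.IsHermitian := hB.1
  set Y : Matrix n n ℂ := C * msqrt ρ with hYdef
  have hYH : Yᴴ = msqrt ρ * Cᴴ := by rw [hYdef, Matrix.conjTranspose_mul, hsρh]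
  have hYY : Y * Yᴴ = B := by
    rw [hYdef, hBdef, Matrix.conjTranspose_mul, hsρh]
    calc C * msqrt ρ * (msqrt ρ * Cᴴ) = C * (msqrt ρ * msqrt ρ) * Cᴴ := by
          simp only [Matrix.mul_assoc]
      _ = C * ρ * Cᴴ := by rw [hsρ2]
  set g : ℝ → ℝ := fun x => if x = 0 then 0 else 1 / Real.sqrt x with hgdef
  set h : ℝ → ℝ := fun x => if x = 0 then 0 else 1 / x with hhdef
  have hPh : (mfun B g)ᴴ = mfun B g := (mfun_isHermitian hBh g).eq
  have hK1 : mfun B g * B = msqrt B := by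
    have h1 := mfun_mul hBh g (fun x => x)
    rw [mfun_id hBh] at h1
    rw [h1, msqrt]
    refine mfun_congr hBh fun i => ?_
    have hx := hB.eigenvalues_nonneg i
    by_cases h0 : hBh.eigenvalues i = 0
    · simp [hgdef, h0]
    · simp only [hgdef, if_neg h0, one_div]
      rw [inv_mul_eq_div, Real.div_sqrt]
  have hP2 : mfun B g * mfun B g = mfun B h := by
    rw [mfun_mul hBh]
    refine mfun_congr hBh fun i => ?_
    have hx := hB.eigenvalues_nonneg i
    simp only [hgdef, hhdef]
    by_cases h0 : hBh.eigenvalues i = 0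
    · simp [h0]
    · simp only [if_neg h0]
      rw [div_mul_div_comm, one_mul, Real.mul_self_sqrt hx]
  have hTBT : mfun B h * B * mfun B h = mfun B h := by
    have h2 := mfun_mul hBh h (fun x => x)
    rw [mfun_id hBh] at h2
    rw [h2, mfun_mul hBh]
    refine mfun_congr hBh fun i => ?_
    simp only [hhdef]
    by_cases h0 : hBh.eigenvalues i = 0
    · simp [h0]
    · simp only [if_neg h0, one_div]
      rw [inv_mul_cancel₀ h0, one_mul]
  have hQQ : (Yᴴ * mfun B h * Y) * (Yᴴ * mfun B h * Y) = Yᴴ * mfun B h * Y := by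
    calc (Yᴴ * mfun B h * Y) * (Yᴴ * mfun B h * Y)
        = Yᴴ * (mfun B h * (Y * Yᴴ) * mfun B h) * Y := by simp only [Matrix.mul_assoc]
      _ = Yᴴ * (mfun B h * B * mfun B h) * Y := by rw [hYY]
      _ = Yᴴ * mfun B h * Y := by rw [hTBT]
  have hQh : (Yᴴ * mfun B h * Y)ᴴ = Yᴴ * mfun B h * Y := by
    have hhH : (mfun B h)ᴴ = mfun B h := (mfun_isHermitian hBh h).eq
    simp only [Matrix.conjTranspose_mul, Matrix.conjTranspose_conjTranspose, hhH,
      Matrix.mul_assoc]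
  have hproj : (1 - Yᴴ * mfun B h * Y).PosSemidef := by
    have h5 : (1 - Yᴴ * mfun B h * Y)ᴴ * (1 - Yᴴ * mfun B h * Y)
        = 1 - Yᴴ * mfun B h * Y := by
      rw [Matrix.conjTranspose_sub, Matrix.conjTranspose_one, hQh]
      have expand : (1 - Yᴴ * mfun B h * Y) * (1 - Yᴴ * mfun B h * Y)
          = 1 - (Yᴴ * mfun B h * Y) - (Yᴴ * mfun B h * Y)
            + (Yᴴ * mfun B h * Y) * (Yᴴ * mfun B h * Y) := by noncomm_ring
      rw [expand, hQQ]
      abel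
    have := Matrix.posSemidef_conjTranspose_mul_self (1 - Yᴴ * mfun B h * Y)
    rwa [h5] at this
  -- trace identity
  have htrace1 : (msqrt B).trace = (Cᴴ * ((mfun B g * Y) * msqrt ρ)).trace := by
    rw [← hK1]
    calc (mfun B g * B).trace = (mfun B g * (Y * Yᴴ)).trace := by rw [hYY]
      _ = ((mfun B g * Y) * Yᴴ).trace := by rw [← Matrix.mul_assoc]
      _ = (Yᴴ * (mfun B g * Y)).trace := Matrix.trace_mul_comm _ _
      _ = ((msqrt ρ * Cᴴ) * (mfun B g * Y)).trace := by rw [hYH]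
      _ = (msqrt ρ * (Cᴴ * (mfun B g * Y))).trace := by rw [Matrix.mul_assoc]
      _ = ((Cᴴ * (mfun B g * Y)) * msqrt ρ).trace := Matrix.trace_mul_comm _ _
      _ = (Cᴴ * ((mfun B g * Y) * msqrt ρ)).trace := by rw [Matrix.mul_assoc]
  -- W and its Gram trace bound
  have hWW : ((mfun B g * Y) * msqrt ρ)ᴴ * ((mfun B g * Y) * msqrt ρ)
      = msqrt ρ * (Yᴴ * mfun B h * Y) * msqrt ρ := by
    calc ((mfun B g * Y) * msqrt ρ)ᴴ * ((mfun B g * Y) * msqrt ρ)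
        = msqrt ρ * (Yᴴ * ((mfun B g * mfun B g) * (Y * msqrt ρ))) := by
          simp only [Matrix.conjTranspose_mul, hPh, hsρh, Matrix.mul_assoc]
      _ = msqrt ρ * (Yᴴ * (mfun B h * (Y * msqrt ρ))) := by rw [hP2]
      _ = msqrt ρ * (Yᴴ * mfun B h * Y) * msqrt ρ := by simp only [Matrix.mul_assoc]
  have htrW : (((mfun B g * Y) * msqrt ρ)ᴴ * ((mfun B g * Y) * msqrt ρ)).trace
      = ((Yᴴ * mfun B h * Y) * ρ).trace := by
    rw [hWW, Matrix.trace_mul_cycle, hsρ2, Matrix.trace_mul_comm]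
  have htrQρ : (((Yᴴ * mfun B h * Y) * ρ).trace).re ≤ 1 := by
    have hpos0 := hproj.conjTranspose_mul_mul_same (msqrt ρ)
    rw [hsρh] at hpos0
    have hpos := trace_re_nonneg hpos0
    have heq : (msqrt ρ * (1 - Yᴴ * mfun B h * Y) * msqrt ρ).trace
        = 1 - ((Yᴴ * mfun B h * Y) * ρ).trace := by
      rw [Matrix.trace_mul_cycle, hsρ2, Matrix.trace_mul_comm, Matrix.sub_mul,
        Matrix.one_mul, Matrix.trace_sub, htr]
    rw [heq] at hpos
    simp only [Complex.sub_re, Complex.one_re] at hpos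
    linarith
  -- Cauchy-Schwarz finish
  rw [htrace1]
  have habs : (((Cᴴ * ((mfun B g * Y) * msqrt ρ)).trace).re) ^ 2
      ≤ ‖(Cᴴ * ((mfun B g * Y) * msqrt ρ)).trace‖ ^ 2 := by
    rw [Complex.sq_norm, Complex.normSq_apply]
    nlinarith [sq_nonneg (((Cᴴ * ((mfun B g * Y) * msqrt ρ)).trace).im)]
  have hcs := frob_cs C ((mfun B g * Y) * msqrt ρ)
  have hCC : 0 ≤ ((Cᴴ * C).trace).re :=
    trace_re_nonneg (Matrix.posSemidef_conjTranspose_mul_self C)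
  have hWle : ((((mfun B g * Y) * msqrt ρ)ᴴ * ((mfun B g * Y) * msqrt ρ)).trace).re ≤ 1 := by
    rw [htrW]; exact htrQρ
  calc (((Cᴴ * ((mfun B g * Y) * msqrt ρ)).trace).re) ^ 2
      ≤ ‖(Cᴴ * ((mfun B g * Y) * msqrt ρ)).trace‖ ^ 2 := habs
    _ ≤ ((Cᴴ * C).trace).re
        * ((((mfun B g * Y) * msqrt ρ)ᴴ * ((mfun B g * Y) * msqrt ρ)).trace).re := hcs
    _ ≤ ((Cᴴ * C).trace).re * 1 := mul_le_mul_of_nonneg_left hWle hCC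
    _ = ((Cᴴ * C).trace).re := mul_one _

end AuxLemmas

/-- Fidelity bound: `‖(√M ρ √M)^{1/2} σ^{1/2}‖₁² ≤ tr[M σ]`. -/
theorem fidelity_bound {n : Type*} [Fintype n] [DecidableEq n]
    (ρ σ M : Matrix n n ℂ) (hρ : IsDensity ρ)
    (hσ : σ.PosSemidef) (hM : M.PosSemidef) :
    traceNorm (msqrt (msqrt M * ρ * msqrt M) * msqrt σ) ^ 2
      ≤ ((M * σ).trace).re := by
  have hsMh : (msqrt M)ᴴ = msqrt M := (msqrt_isHermitian hM.1).eq
  have hsσh : (msqrt σ)ᴴ = msqrt σ := (msqrt_isHermitian hσ.1).eq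
  have hA' : (msqrt M * ρ * msqrt M).PosSemidef := by
    have := hρ.1.mul_mul_conjTranspose_same (msqrt M)
    rwa [hsMh] at this
  have hXX : (msqrt (msqrt M * ρ * msqrt M) * msqrt σ)ᴴ * (msqrt (msqrt M * ρ * msqrt M) * msqrt σ)
      = (msqrt σ * msqrt M) * ρ * (msqrt σ * msqrt M)ᴴ := by
    simp only [Matrix.conjTranspose_mul, hsσh, hsMh, (msqrt_isHermitian hA'.1).eq]
    calc msqrt σ * msqrt (msqrt M * ρ * msqrt M) * (msqrt (msqrt M * ρ * msqrt M) * msqrt σ)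
        = msqrt σ * ((msqrt (msqrt M * ρ * msqrt M) * msqrt (msqrt M * ρ * msqrt M)) * msqrt σ) := by
          simp only [Matrix.mul_assoc]
      _ = msqrt σ * msqrt M * ρ * (msqrt M * msqrt σ) := by
          rw [msqrt_mul_self hA']
          simp only [Matrix.mul_assoc]
  have htr2 : (((msqrt σ * msqrt M)ᴴ * (msqrt σ * msqrt M)).trace) = ((M * σ).trace) := by
    rw [Matrix.conjTranspose_mul, hsσh, hsMh]
    calc ((msqrt M * msqrt σ) * (msqrt σ * msqrt M)).trace
        = (msqrt M * ((msqrt σ * msqrt σ) * msqrt M)).trace := by simp only [Matrix.mul_assoc]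
      _ = (msqrt M * (σ * msqrt M)).trace := by rw [msqrt_mul_self hσ]
      _ = ((σ * msqrt M) * msqrt M).trace := Matrix.trace_mul_comm _ _
      _ = (σ * (msqrt M * msqrt M)).trace := by rw [Matrix.mul_assoc]
      _ = (σ * M).trace := by rw [msqrt_mul_self hM]
      _ = (M * σ).trace := Matrix.trace_mul_comm _ _
  simp only [traceNorm]
  rw [hXX]
  have hkey := key_trace_bound (C := msqrt σ * msqrt M) hρ.1 hρ.2
  rw [htr2] at hkey
  exact hkey


end QIT
end
end

section
/- Key trace inequality in the Petz bound: for a density matrix ρ_{AB} on A ⊗ B with d_A = dim A and α ∈ [1/2,1], one has tr[ρ_{AB}^{3/2} (I_A ⊗ (tr_A ρ_{AB}^α)^{−1/(2α)})] ≤ d_A, where the inverse is taken on the support. -/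
open scoped Kronecker ComplexOrder
open Matrix

attribute [local instance] Classical.propDecidable

noncomputable section

namespace QIT

section AuxQIT

set_option linter.unusedSectionVars false

variable {n m : Type*} [Fintype n] [Fintype m] [DecidableEq n] [DecidableEq m]

lemma mfun_eq {A : Matrix n n ℂ} (hA : A.IsHermitian) (f : ℝ → ℝ) :
    mfun A f = (hA.eigenvectorUnitary : Matrix n n ℂ) *
      Matrix.diagonal (fun i => (f (hA.eigenvalues i) : ℂ)) *
      star (hA.eigenvectorUnitary : Matrix n n ℂ) := by
  rw [mfun, dif_pos hA]

lemma mpow_eq {A : Matrix n n ℂ} (hA : A.IsHermitian) (p : ℝ) :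
    mpow A p = (hA.eigenvectorUnitary : Matrix n n ℂ) *
      Matrix.diagonal (fun i => ((hA.eigenvalues i ^ p : ℝ) : ℂ)) *
      star (hA.eigenvectorUnitary : Matrix n n ℂ) := mfun_eq hA _

/-- trace of `U * diagonal f * Uᴴ` for unitary `U`. -/
lemma trace_unitary_diag {U : Matrix n n ℂ} (hU : U ∈ Matrix.unitaryGroup n ℂ) (f : n → ℂ) :
    (U * Matrix.diagonal f * star U).trace = ∑ i, f i := by
  rw [Matrix.trace_mul_cycle, Matrix.mem_unitaryGroup_iff'.mp hU, one_mul, Matrix.trace_diagonal]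

lemma trace_diag_mul_diag_conj (f : n → ℂ) (g : m → ℂ) (M : Matrix n m ℂ) :
    (Matrix.diagonal f * M * Matrix.diagonal g * Mᴴ).trace
      = ∑ k, ∑ p, f k * g p * (M k p * star (M k p)) := by
  have h1 : Matrix.diagonal f * M * Matrix.diagonal g
      = Matrix.of fun k p => f k * M k p * g p := by
    ext k p
    simp [Matrix.mul_diagonal, Matrix.diagonal_mul]
  rw [h1]
  simp only [Matrix.trace, Matrix.diag, Matrix.mul_apply, Matrix.conjTranspose_apply,
    Matrix.of_apply]
  refine Finset.sum_congr rfl fun k _ => Finset.sum_congr rfl fun p _ => ?_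
  simp [RCLike.star_def]
  ring

lemma diag_quad (d : n → ℝ) (x : n → ℂ) :
    star x ⬝ᵥ (Matrix.diagonal (fun i => (d i : ℂ)) *ᵥ x)
      = ((∑ j, d j * Complex.normSq (x j) : ℝ) : ℂ) := by
  push_cast
  simp only [dotProduct, Matrix.mulVec_diagonal, Pi.star_apply, RCLike.star_def]
  refine Finset.sum_congr rfl fun j _ => ?_
  rw [Complex.normSq_eq_conj_mul_self]
  ring

lemma conj_quad (B : Matrix n n ℂ) (A : Matrix n n ℂ) (x : n → ℂ) :
    star x ⬝ᵥ ((Bᴴ * A * B) *ᵥ x) = star (B *ᵥ x) ⬝ᵥ (A *ᵥ (B *ᵥ x)) := by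
  rw [← Matrix.mulVec_mulVec, ← Matrix.mulVec_mulVec, Matrix.star_mulVec,
    ← dotProduct_mulVec]

/-- quadratic form of `U * diagonal (real d) * Uᴴ`. -/
lemma quad_UDU (U : Matrix n n ℂ) (d : n → ℝ) (u : n → ℂ) :
    star u ⬝ᵥ ((U * Matrix.diagonal (fun i => (d i : ℂ)) * star U) *ᵥ u)
      = ((∑ k, d k * Complex.normSq ((star U *ᵥ u) k) : ℝ) : ℂ) := by
  have h : U * Matrix.diagonal (fun i => (d i : ℂ)) * star U
      = (star U)ᴴ * Matrix.diagonal (fun i => (d i : ℂ)) * star U := by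
    rw [Matrix.star_eq_conjTranspose, Matrix.conjTranspose_conjTranspose]
  rw [h, conj_quad, diag_quad]

/-- the scalar key lemma -/
lemma scalar_key {ι : Type*} [Fintype ι] (μ : ι → ℝ) (hμ : ∀ j, 0 ≤ μ j)
    (g : ι → ℂ) (s : ℝ) (hs : 0 ≤ s)
    (h : ∀ x : ι → ℂ, s * Complex.normSq (∑ j, g j * x j) ≤ ∑ j, μ j * Complex.normSq (x j)) :
    s * ∑ j, Complex.normSq (g j) * (μ j) ^ (-1 : ℝ) ≤ 1 := by
  set t : ℝ := ∑ j, Complex.normSq (g j) * (μ j) ^ (-1 : ℝ) with ht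
  have ht0 : 0 ≤ t := Finset.sum_nonneg fun j _ =>
    mul_nonneg (Complex.normSq_nonneg _) (Real.rpow_nonneg (hμ j) _)
  set x : ι → ℂ := fun j => (starRingEnd ℂ) (g j) * ((μ j) ^ (-1 : ℝ) : ℝ) with hx
  have hA : (∑ j, g j * x j) = (t : ℂ) := by
    rw [ht]
    push_cast
    refine Finset.sum_congr rfl fun j _ => ?_
    rw [hx]
    rw [show g j * ((starRingEnd ℂ) (g j) * ((μ j) ^ (-1 : ℝ) : ℝ))
      = g j * (starRingEnd ℂ) (g j) * ((μ j) ^ (-1 : ℝ) : ℝ) from by ring, Complex.mul_conj]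
  have hB : ∑ j, μ j * Complex.normSq (x j) = t := by
    rw [ht]
    refine Finset.sum_congr rfl fun j _ => ?_
    rw [hx]
    simp only [Complex.normSq_mul, Complex.normSq_conj, Complex.normSq_ofReal]
    rcases eq_or_lt_of_le (hμ j) with h0 | hpos
    · rw [← h0, Real.zero_rpow (by norm_num)]
      ring
    · rw [Real.rpow_neg_one]
      field_simp
  have hh := h x
  rw [hA, hB, Complex.normSq_ofReal] at hh
  rcases eq_or_lt_of_le ht0 with h0 | hpos
  · rw [← h0]; norm_num
  · have h2 : s * t * t ≤ 1 * t := by nlinarith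
    exact le_of_mul_le_mul_right (by linarith) hpos

end AuxQIT

section AuxQIT2

set_option linter.unusedSectionVars false

variable {a b : Type*} [Fintype a] [Fintype b] [DecidableEq a] [DecidableEq b]

/-- embedding of a vector on `b` into the `a₀` block of `a × b`. -/
def embv (a₀ : a) (x : b → ℂ) : a × b → ℂ := fun p => if p.1 = a₀ then x p.2 else 0

lemma ptraceFst_isHermitian {X : Matrix (a × b) (a × b) ℂ} (hX : X.IsHermitian) :
    (ptraceFst X).IsHermitian := by
  ext i j
  simp only [Matrix.conjTranspose_apply, ptraceFst, Matrix.of_apply, star_sum]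
  refine Finset.sum_congr rfl fun k _ => ?_
  exact congrFun (congrFun hX (k, i)) (k, j) ▸ (Matrix.conjTranspose_apply X _ _ ▸ rfl)

lemma mulVec_embv_apply (N : Matrix (a × b) (a × b) ℂ) (a₀ : a) (y : b → ℂ) (k : a × b) :
    (N *ᵥ embv a₀ y) k = ∑ i, N k (a₀, i) * y i := by
  simp only [Matrix.mulVec, dotProduct, embv, Fintype.sum_prod_type, mul_ite, mul_zero]
  rw [Finset.sum_comm]
  simp only [Finset.sum_ite_eq', Finset.mem_univ, if_true]

lemma kron_entry (U : Matrix (a × b) (a × b) ℂ) (W : Matrix b b ℂ) (k : a × b) (a₀ : a) (j : b) :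
    (star U * ((1 : Matrix a a ℂ) ⊗ₖ W)) k (a₀, j) = ∑ i, star U k (a₀, i) * W i j := by
  simp only [Matrix.mul_apply, Matrix.kroneckerMap_apply, Matrix.one_apply, Fintype.sum_prod_type,
    mul_ite, ite_mul, zero_mul, mul_zero, mul_one, one_mul]
  rw [Finset.sum_comm]
  simp only [Finset.sum_ite_eq', Finset.mem_univ, if_true]

lemma star_embv_dot (a₀ : a) (x : b → ℂ) (v : a × b → ℂ) :
    star (embv a₀ x) ⬝ᵥ v = ∑ i, star (x i) * v (a₀, i) := by
  simp only [dotProduct, embv, Pi.star_apply, Fintype.sum_prod_type, apply_ite, star_zero,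
    ite_mul, zero_mul]
  rw [Finset.sum_comm]
  simp only [Finset.sum_ite_eq', Finset.mem_univ, if_true]

lemma mulvec_embv (U : Matrix (a × b) (a × b) ℂ) (W : Matrix b b ℂ)
    (a₀ : a) (x : b → ℂ) (k : a × b) :
    (star U *ᵥ embv a₀ (W *ᵥ x)) k
      = ∑ j, ((star U * ((1 : Matrix a a ℂ) ⊗ₖ W)) k (a₀, j)) * x j := by
  rw [mulVec_embv_apply]
  simp only [kron_entry, Matrix.mulVec, dotProduct, Finset.mul_sum, Finset.sum_mul]
  rw [Finset.sum_comm]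
  exact Finset.sum_congr rfl fun j _ => Finset.sum_congr rfl fun i _ => by ring

lemma ptraceFst_quad (X : Matrix (a × b) (a × b) ℂ) (x : b → ℂ) :
    star x ⬝ᵥ ((ptraceFst X) *ᵥ x)
      = ∑ a₀ : a, star (embv a₀ x) ⬝ᵥ (X *ᵥ (embv a₀ x)) := by
  have hrhs : ∀ a₀ : a, star (embv a₀ x) ⬝ᵥ (X *ᵥ (embv a₀ x))
      = ∑ i, star (x i) * ∑ j, X (a₀, i) (a₀, j) * x j := by
    intro a₀
    rw [star_embv_dot]
    exact Finset.sum_congr rfl fun i _ => by rw [mulVec_embv_apply]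
  calc star x ⬝ᵥ ((ptraceFst X) *ᵥ x)
      = ∑ i : b, ∑ a₀ : a, ∑ j : b, star (x i) * (X (a₀, i) (a₀, j) * x j) := by
        simp only [dotProduct, Matrix.mulVec, ptraceFst, Matrix.of_apply, Pi.star_apply,
          Finset.mul_sum, Finset.sum_mul]
        exact Finset.sum_congr rfl fun i _ => Finset.sum_comm
    _ = ∑ a₀ : a, ∑ i : b, ∑ j : b, star (x i) * (X (a₀, i) (a₀, j) * x j) := Finset.sum_comm
    _ = ∑ a₀ : a, star (embv a₀ x) ⬝ᵥ (X *ᵥ (embv a₀ x)) := by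
        refine Finset.sum_congr rfl fun a₀ _ => ?_
        rw [hrhs a₀]
        exact Finset.sum_congr rfl fun i _ => by rw [Finset.mul_sum]

end AuxQIT2


/-- Key trace inequality: `tr[ρ_{AB}^{3/2} (I_A ⊗ (tr_A ρ_{AB}^α)^{-1/(2α)})] ≤ d_A`
for `α ∈ [1/2, 1]` (inverse taken on the support). -/
theorem key_trace_inequality {a b : Type*} [Fintype a] [Fintype b]
    [DecidableEq a] [DecidableEq b]
    (ρ : Matrix (a × b) (a × b) ℂ) (hρ : IsDensity ρ)
    (α : ℝ) (hα : α ∈ Set.Icc (1 / 2 : ℝ) 1) :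
    ((mpow ρ (3 / 2) *
        ((1 : Matrix a a ℂ) ⊗ₖ mpow (ptraceFst (mpow ρ α)) (-(1 / (2 * α))))).trace).re
      ≤ (Fintype.card a : ℝ) := by
  classical
  obtain ⟨hpsd, htr⟩ := hρ
  obtain ⟨hα₁, hα₂⟩ := hα
  have hα0 : 0 < α := lt_of_lt_of_le (by norm_num) hα₁
  set β : ℝ := 1 / (2 * α) with hβ
  have hβpos : 0 < β := by positivity
  have hβle1 : β ≤ 1 := by
    rw [hβ, div_le_one (by positivity)]
    linarith
  -- spectral data for ρ
  have hH : ρ.IsHermitian := hpsd.1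
  set U : Matrix (a × b) (a × b) ℂ := (hH.eigenvectorUnitary : Matrix (a × b) (a × b) ℂ)
    with hUdef
  set lam : (a × b) → ℝ := hH.eigenvalues with hlamdef
  have hU : U ∈ Matrix.unitaryGroup (a × b) ℂ := hH.eigenvectorUnitary.2
  have hlam0 : ∀ k, 0 ≤ lam k := fun k => hpsd.eigenvalues_nonneg k
  have hlamsum : ∑ k, lam k = 1 := by
    have h1 : ρ.trace = ((∑ k, lam k : ℝ) : ℂ) := by
      conv_lhs => rw [hH.spectral_theorem, Unitary.conjStarAlgAut_apply]
      rw [trace_unitary_diag hU]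
      push_cast
      rfl
    rw [htr] at h1
    exact_mod_cast h1.symm
  have hlam1 : ∀ k, lam k ≤ 1 := by
    intro k
    rw [← hlamsum]
    exact Finset.single_le_sum (fun j _ => hlam0 j) (Finset.mem_univ k)
  -- positivity of mpow ρ α
  have hPα : (mpow ρ α).PosSemidef := by
    rw [mpow_eq hH, Matrix.star_eq_conjTranspose]
    exact Matrix.PosSemidef.mul_mul_conjTranspose_same
      (Matrix.PosSemidef.diagonal fun i => by
        simp only [Pi.zero_apply]
        exact Complex.zero_le_real.mpr (Real.rpow_nonneg (hlam0 i) α)) U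
  -- spectral data for σ
  set σ : Matrix b b ℂ := ptraceFst (mpow ρ α) with hσdef
  have hσpsd : σ.PosSemidef := by
    refine Matrix.PosSemidef.of_dotProduct_mulVec_nonneg (ptraceFst_isHermitian hPα.1) fun x => ?_
    rw [hσdef, ptraceFst_quad]
    exact Finset.sum_nonneg fun a₀ _ => hPα.dotProduct_mulVec_nonneg _
  have hσH : σ.IsHermitian := hσpsd.1
  set W : Matrix b b ℂ := (hσH.eigenvectorUnitary : Matrix b b ℂ) with hWdef
  set mu : b → ℝ := hσH.eigenvalues with hmudef
  have hW : W ∈ Matrix.unitaryGroup b ℂ := hσH.eigenvectorUnitary.2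
  have hmu0 : ∀ j, 0 ≤ mu j := fun j => hσpsd.eigenvalues_nonneg j
  -- the master unitary M
  set M : Matrix (a × b) (a × b) ℂ := star U * ((1 : Matrix a a ℂ) ⊗ₖ W) with hMdef
  have hNH : ((1 : Matrix a a ℂ) ⊗ₖ W)ᴴ = (1 : Matrix a a ℂ) ⊗ₖ Wᴴ := by
    ext p q
    rw [Matrix.conjTranspose_apply, Matrix.kroneckerMap_apply, Matrix.kroneckerMap_apply,
      Matrix.conjTranspose_apply]
    by_cases h : p.1 = q.1
    · simp [Matrix.one_apply, h]
    · simp [Matrix.one_apply, h, Ne.symm h]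
  have hMH : Mᴴ = ((1 : Matrix a a ℂ) ⊗ₖ Wᴴ) * U := by
    rw [hMdef, Matrix.conjTranspose_mul, hNH, Matrix.star_eq_conjTranspose,
      Matrix.conjTranspose_conjTranspose]
  have hMun : M * Mᴴ = 1 := by
    rw [hMdef, hMH]
    calc star U * ((1 : Matrix a a ℂ) ⊗ₖ W) * (((1 : Matrix a a ℂ) ⊗ₖ Wᴴ) * U)
        = star U * (((1 : Matrix a a ℂ) ⊗ₖ W) * ((1 : Matrix a a ℂ) ⊗ₖ Wᴴ)) * U := by
          simp only [Matrix.mul_assoc]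
      _ = 1 := by
          rw [← Matrix.mul_kronecker_mul, mul_one, ← Matrix.star_eq_conjTranspose,
            Matrix.mem_unitaryGroup_iff.mp hW, Matrix.one_kronecker_one, Matrix.mul_one,
            Matrix.mem_unitaryGroup_iff'.mp hU]
  have hMrow : ∀ k, ∑ p, Complex.normSq (M k p) = 1 := by
    intro k
    have h1 := congrFun (congrFun hMun k) k
    rw [Matrix.mul_apply, Matrix.one_apply_eq] at h1
    have h2 : ∀ p, M k p * Mᴴ p k = ((Complex.normSq (M k p) : ℝ) : ℂ) := by
      intro p
      rw [Matrix.conjTranspose_apply, RCLike.star_def, Complex.mul_conj]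
    rw [Finset.sum_congr rfl fun p _ => h2 p] at h1
    exact_mod_cast h1
  -- the trace as explicit double sum
  have hρspec : mpow ρ (3 / 2 : ℝ)
      = U * Matrix.diagonal (fun k => ((lam k ^ ((3 : ℝ) / 2) : ℝ) : ℂ)) * star U :=
    mpow_eq hH _
  have hdiagkron : Matrix.diagonal (fun p : a × b => ((mu p.2 ^ (-β) : ℝ) : ℂ))
      = (1 : Matrix a a ℂ) ⊗ₖ Matrix.diagonal (fun j => ((mu j ^ (-β) : ℝ) : ℂ)) := by
    rw [← Matrix.diagonal_one, Matrix.diagonal_kronecker_diagonal]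
    simp
  have hkron : (1 : Matrix a a ℂ) ⊗ₖ mpow σ (-β)
      = ((1 : Matrix a a ℂ) ⊗ₖ W) *
          Matrix.diagonal (fun p : a × b => ((mu p.2 ^ (-β) : ℝ) : ℂ)) *
          ((1 : Matrix a a ℂ) ⊗ₖ Wᴴ) := by
    rw [hdiagkron, ← Matrix.mul_kronecker_mul, ← Matrix.mul_kronecker_mul, mpow_eq hσH,
      Matrix.star_eq_conjTranspose]
    simp
    rfl
  have hgoalT : ((mpow ρ (3 / 2) *
        ((1 : Matrix a a ℂ) ⊗ₖ mpow σ (-β))).trace).re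
      = ∑ k, ∑ p : a × b,
          lam k ^ ((3 : ℝ) / 2) * mu p.2 ^ (-β) * Complex.normSq (M k p) := by
    have htr2 : (mpow ρ (3 / 2) * ((1 : Matrix a a ℂ) ⊗ₖ mpow σ (-β))).trace
        = (Matrix.diagonal (fun k => ((lam k ^ ((3 : ℝ) / 2) : ℝ) : ℂ)) * M *
            Matrix.diagonal (fun p : a × b => ((mu p.2 ^ (-β) : ℝ) : ℂ)) * Mᴴ).trace := by
      rw [hρspec, hkron]
      rw [show U * Matrix.diagonal (fun k => ((lam k ^ ((3 : ℝ) / 2) : ℝ) : ℂ)) * star U *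
          (((1 : Matrix a a ℂ) ⊗ₖ W) *
            Matrix.diagonal (fun p : a × b => ((mu p.2 ^ (-β) : ℝ) : ℂ)) *
            ((1 : Matrix a a ℂ) ⊗ₖ Wᴴ))
          = U * (Matrix.diagonal (fun k => ((lam k ^ ((3 : ℝ) / 2) : ℝ) : ℂ)) * (star U *
            (((1 : Matrix a a ℂ) ⊗ₖ W) *
            (Matrix.diagonal (fun p : a × b => ((mu p.2 ^ (-β) : ℝ) : ℂ)) *
            ((1 : Matrix a a ℂ) ⊗ₖ Wᴴ))))) from by simp only [Matrix.mul_assoc]]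
      rw [Matrix.trace_mul_comm]
      congr 1
      rw [hMdef, hMH]
      simp only [Matrix.mul_assoc]
    rw [htr2, trace_diag_mul_diag_conj]
    have hterm : ∀ (k p : a × b),
        ((lam k ^ ((3 : ℝ) / 2) : ℝ) : ℂ) * ((mu p.2 ^ (-β) : ℝ) : ℂ) * (M k p * star (M k p))
          = (((lam k ^ ((3 : ℝ) / 2) * mu p.2 ^ (-β) * Complex.normSq (M k p)) : ℝ) : ℂ) := by
      intro k p
      rw [RCLike.star_def, Complex.mul_conj]
      push_cast
      ring
    rw [Finset.sum_congr rfl fun k _ => Finset.sum_congr rfl fun p _ => hterm k p]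
    norm_cast
  -- the key per-(k, a₀) bound
  have e2 : Matrix.diagonal (fun j => ((mu j : ℝ) : ℂ)) = Wᴴ * σ * W := by
    have h1 : Wᴴ * W = 1 := by
      rw [← Matrix.star_eq_conjTranspose]
      exact Matrix.mem_unitaryGroup_iff'.mp hW
    conv_rhs => rw [hσH.spectral_theorem, Unitary.conjStarAlgAut_apply]
    rw [Matrix.star_eq_conjTranspose,
      show Wᴴ * (W * Matrix.diagonal (RCLike.ofReal ∘ hσH.eigenvalues) * Wᴴ) * W
        = (Wᴴ * W) * Matrix.diagonal (RCLike.ofReal ∘ hσH.eigenvalues) * (Wᴴ * W) from by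
          simp only [Matrix.mul_assoc], h1, Matrix.one_mul, Matrix.mul_one]
    rfl
  have hkey : ∀ (k : a × b) (a₀ : a),
      lam k ^ α * ∑ j, Complex.normSq (M k (a₀, j)) * mu j ^ (-1 : ℝ) ≤ 1 := by
    intro k a₀
    refine scalar_key mu hmu0 (fun j => M k (a₀, j)) (lam k ^ α)
      (Real.rpow_nonneg (hlam0 k) α) ?_
    intro x
    set y : b → ℂ := W *ᵥ x with hy
    have eterm : ∀ a' : a, star (embv a' y) ⬝ᵥ ((mpow ρ α) *ᵥ embv a' y)
        = ((∑ k', lam k' ^ α * Complex.normSq ((star U *ᵥ embv a' y) k') : ℝ) : ℂ) := by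
      intro a'
      rw [mpow_eq hH]
      exact quad_UDU U (fun k' => lam k' ^ α) (embv a' y)
    have hreal : ∑ j, mu j * Complex.normSq (x j)
        = ∑ a' : a, ∑ k', lam k' ^ α * Complex.normSq ((star U *ᵥ embv a' y) k') := by
      have estep : ((∑ j, mu j * Complex.normSq (x j) : ℝ) : ℂ)
          = ∑ a' : a, star (embv a' y) ⬝ᵥ ((mpow ρ α) *ᵥ embv a' y) := by
        rw [← diag_quad mu x, e2, conj_quad, hσdef, ptraceFst_quad]
      rw [Finset.sum_congr rfl (fun a' (_ : a' ∈ Finset.univ) => eterm a')] at estep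
      rw [show (∑ a' : a, ((∑ k', lam k' ^ α *
            Complex.normSq ((star U *ᵥ embv a' y) k') : ℝ) : ℂ))
          = (((∑ a' : a, ∑ k', lam k' ^ α *
            Complex.normSq ((star U *ᵥ embv a' y) k') : ℝ)) : ℂ) from by push_cast; rfl] at estep
      exact_mod_cast estep
    have em : (∑ j, M k (a₀, j) * x j) = (star U *ᵥ embv a₀ y) k := by
      rw [hy, mulvec_embv, hMdef]
    rw [em, hreal]
    have step1 : lam k ^ α * Complex.normSq ((star U *ᵥ embv a₀ y) k)
        ≤ ∑ k', lam k' ^ α * Complex.normSq ((star U *ᵥ embv a₀ y) k') :=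
      Finset.single_le_sum (fun k' _ =>
        mul_nonneg (Real.rpow_nonneg (hlam0 k') α) (Complex.normSq_nonneg _))
        (Finset.mem_univ k)
    refine le_trans step1 (Finset.single_le_sum
      (f := fun a' => ∑ k', lam k' ^ α * Complex.normSq ((star U *ᵥ embv a' y) k'))
      (fun a' _ => Finset.sum_nonneg fun k' _ =>
        mul_nonneg (Real.rpow_nonneg (hlam0 k') α) (Complex.normSq_nonneg _))
      (Finset.mem_univ a₀))
  -- assemble
  have hne : Nonempty a := by
    rcases isEmpty_or_nonempty (a × b) with he | hne
    · exfalso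
      rw [Matrix.trace, Finset.univ_eq_empty, Finset.sum_empty] at htr
      exact one_ne_zero htr.symm
    · exact Nonempty.map Prod.fst hne
  have hcard1 : (1 : ℝ) ≤ (Fintype.card a : ℝ) := by
    have := Fintype.card_pos (α := a)
    exact_mod_cast this
  set w : (a × b) × (a × b) → ℝ := fun q => lam q.1 * Complex.normSq (M q.1 q.2) with hw
  set z : (a × b) × (a × b) → ℝ := fun q => lam q.1 ^ α * mu q.2.2 ^ (-1 : ℝ) with hz
  have hw0 : ∀ q, 0 ≤ w q := fun q => mul_nonneg (hlam0 q.1) (Complex.normSq_nonneg _)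
  have hz0 : ∀ q, 0 ≤ z q := fun q =>
    mul_nonneg (Real.rpow_nonneg (hlam0 q.1) α) (Real.rpow_nonneg (hmu0 q.2.2) _)
  have hwsum : ∑ q, w q = 1 := by
    calc ∑ q : (a × b) × (a × b), w q = ∑ k, ∑ p : a × b, lam k * Complex.normSq (M k p) :=
          Fintype.sum_prod_type (f := w)
      _ = ∑ k, lam k * ∑ p : a × b, Complex.normSq (M k p) := by
          exact Finset.sum_congr rfl fun k _ => by rw [Finset.mul_sum]
      _ = 1 := by
          rw [Finset.sum_congr rfl fun k (_ : k ∈ Finset.univ) => by rw [hMrow k, mul_one]]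
          exact hlamsum
  have hS : ∑ q, w q * z q ≤ (Fintype.card a : ℝ) := by
    calc ∑ q, w q * z q = ∑ k, ∑ p : a × b, w (k, p) * z (k, p) :=
          Fintype.sum_prod_type (f := fun q => w q * z q)
      _ = ∑ k, lam k * ∑ a₀ : a,
            (lam k ^ α * ∑ j, Complex.normSq (M k (a₀, j)) * mu j ^ (-1 : ℝ)) := by
          refine Finset.sum_congr rfl fun k _ => ?_
          rw [Fintype.sum_prod_type, Finset.mul_sum]
          refine Finset.sum_congr rfl fun a₀ _ => ?_
          rw [Finset.mul_sum, Finset.mul_sum]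
          refine Finset.sum_congr rfl fun j _ => ?_
          simp only [hw, hz]
          ring
      _ ≤ ∑ k, lam k * ∑ _a₀ : a, (1 : ℝ) := by
          refine Finset.sum_le_sum fun k _ => mul_le_mul_of_nonneg_left
            (Finset.sum_le_sum fun a₀ _ => hkey k a₀) (hlam0 k)
      _ = (Fintype.card a : ℝ) := by
          simp only [Finset.sum_const, Finset.card_univ, nsmul_eq_mul, mul_one]
          rw [← Finset.sum_mul, hlamsum, one_mul]
  have hzp : ∀ q, (z q ^ β) ^ (2 * α) = z q := by
    intro q
    rw [← Real.rpow_mul (hz0 q), show β * (2 * α) = 1 from by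
      rw [hβ]; field_simp, Real.rpow_one]
  have hjensen := Real.arith_mean_le_rpow_mean Finset.univ w (fun q => z q ^ β)
    (fun q _ => hw0 q) hwsum (fun q _ => Real.rpow_nonneg (hz0 q) β)
    (p := 2 * α) (by linarith)
  have hTw : ∑ k, ∑ p : a × b,
        lam k ^ ((3 : ℝ) / 2) * mu p.2 ^ (-β) * Complex.normSq (M k p)
      = ∑ q : (a × b) × (a × b), w q * z q ^ β := by
    rw [Fintype.sum_prod_type (f := fun q : (a × b) × (a × b) => w q * z q ^ β)]
    refine Finset.sum_congr rfl fun k _ => Finset.sum_congr rfl fun p _ => ?_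
    simp only [hw, hz]
    rw [Real.mul_rpow (Real.rpow_nonneg (hlam0 k) α) (Real.rpow_nonneg (hmu0 p.2) _),
      ← Real.rpow_mul (hlam0 k), ← Real.rpow_mul (hmu0 p.2),
      show α * β = 1 / 2 from by rw [hβ]; field_simp,
      show (-1 : ℝ) * β = -β from by ring,
      show ((3 : ℝ) / 2) = 1 + 1 / 2 from by norm_num,
      Real.rpow_add' (hlam0 k) (by norm_num), Real.rpow_one]
    ring
  rw [hgoalT, hTw]
  calc ∑ q : (a × b) × (a × b), w q * z q ^ β
      ≤ (∑ q : (a × b) × (a × b), w q * (z q ^ β) ^ (2 * α)) ^ (1 / (2 * α)) := hjensen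
    _ = (∑ q : (a × b) × (a × b), w q * z q) ^ β := by
        rw [← hβ]
        congr 1
        exact Finset.sum_congr rfl fun q _ => by rw [hzp q]
    _ ≤ (Fintype.card a : ℝ) ^ β :=
        Real.rpow_le_rpow (Finset.sum_nonneg fun q _ => mul_nonneg (hw0 q) (hz0 q))
          hS hβpos.le
    _ ≤ (Fintype.card a : ℝ) ^ (1 : ℝ) :=
        Real.rpow_le_rpow_of_exponent_le hcard1 hβle1
    _ = (Fintype.card a : ℝ) := Real.rpow_one _


end QIT
end
end

section
/- Tensor-product structure of polar sets: let 𝒜₁ ⊆ 𝒟(R), 𝒜₂ ⊆ 𝒟(B) be sets of density matrices and 𝒜₃ := {(id_R ⊗ 𝒩)(ρ_{RA}) : ρ_{RA} ∈ 𝒟(RA) with tr_A ρ_{RA} ∈ 𝒜₁} where 𝒜₂ = 𝒩(𝒟(A)) for a CPTP map 𝒩. If X_R ≥ 0 satisfies tr[X_R Y] ≤ 1 for all Y ∈ 𝒜₁ and X_B ≥ 0 satisfies tr[X_B Y] ≤ 1 for all Y ∈ 𝒜₂, then tr[(X_R ⊗ X_B) Z] ≤ 1 for all Z ∈ 𝒜₃.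 -/
open scoped Kronecker ComplexOrder
open Matrix

attribute [local instance] Classical.propDecidable

noncomputable section

namespace QIT

section PolarAux

lemma kron_conjTranspose' {r a : Type*} (A : Matrix r r ℂ) (B : Matrix a a ℂ) :
    (A ⊗ₖ B)ᴴ = Aᴴ ⊗ₖ Bᴴ := by
  ext p q
  simp [conjTranspose_apply, kroneckerMap_apply, mul_comm]

lemma ptraceFst_eq_sum' {r a : Type*} [Fintype r] (Z : Matrix (r × a) (r × a) ℂ) :
    ptraceFst Z = ∑ k, Z.submatrix (fun s => (k, s)) (fun s => (k, s)) := by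
  ext s t
  simp [ptraceFst, Matrix.sum_apply]

lemma ptraceFst_posSemidef' {r a : Type*} [Fintype r] [Fintype a]
    {Z : Matrix (r × a) (r × a) ℂ} (hZ : Z.PosSemidef) :
    (ptraceFst Z).PosSemidef := by
  rw [ptraceFst_eq_sum']
  exact Finset.sum_induction _ _ (fun x y hx hy => hx.add hy) Matrix.PosSemidef.zero
    (fun k _ => hZ.submatrix _)

lemma ptr_comm' {r a : Type*} [Fintype r] [Fintype a] [DecidableEq a]
    (A : Matrix r r ℂ) (Z : Matrix (r × a) (r × a) ℂ) :
    ptraceFst ((A ⊗ₖ (1 : Matrix a a ℂ)) * Z) = ptraceFst (Z * (A ⊗ₖ (1 : Matrix a a ℂ))) := by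
  ext s t
  simp only [ptraceFst, of_apply, mul_apply, kroneckerMap_apply, one_apply,
    Fintype.sum_prod_type, mul_ite, mul_one, mul_zero, ite_mul, one_mul, zero_mul,
    Finset.sum_ite_eq, Finset.sum_ite_eq', Finset.mem_univ, if_true]
  rw [Finset.sum_comm]
  simp [mul_comm]

lemma trace_psd_eq' {n : Type*} [Fintype n] [DecidableEq n] {M : Matrix n n ℂ}
    (hM : M.PosSemidef) : M.trace = ((∑ i, hM.1.eigenvalues i : ℝ) : ℂ) := by
  conv_lhs => rw [hM.1.spectral_theorem]
  simp only [Unitary.conjStarAlgAut_apply, Unitary.coe_star]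
  rw [Matrix.trace_mul_cycle]
  rw [show (star (hM.1.eigenvectorUnitary : Matrix n n ℂ)) *
      (hM.1.eigenvectorUnitary : Matrix n n ℂ) = 1 from
    Matrix.mem_unitaryGroup_iff'.mp (hM.1.eigenvectorUnitary).2]
  simp [Matrix.trace_diagonal]

lemma trace_psd_re_nonneg' {n : Type*} [Fintype n] [DecidableEq n] {M : Matrix n n ℂ}
    (hM : M.PosSemidef) : 0 ≤ M.trace.re := by
  rw [trace_psd_eq' hM]
  simp only [Complex.ofReal_re]
  exact Finset.sum_nonneg fun i _ => hM.eigenvalues_nonneg i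

lemma trace_psd_real' {n : Type*} [Fintype n] [DecidableEq n] {M : Matrix n n ℂ}
    (hM : M.PosSemidef) : M.trace = ((M.trace.re : ℝ) : ℂ) := by
  rw [trace_psd_eq' hM]; simp

lemma psd_trace_zero' {n : Type*} [Fintype n] [DecidableEq n] {M : Matrix n n ℂ}
    (hM : M.PosSemidef) (h : M.trace.re = 0) : M = 0 := by
  have h2 := trace_psd_eq' hM
  have h3 : ∑ i, hM.1.eigenvalues i = 0 := by
    have := congrArg Complex.re h2
    simpa [h] using this.symm
  have h4 : ∀ i ∈ Finset.univ, hM.1.eigenvalues i = 0 :=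
    (Finset.sum_eq_zero_iff_of_nonneg fun i _ => hM.eigenvalues_nonneg i).mp h3
  have h5 := hM.1.spectral_theorem
  rw [h5]
  have h6 : Matrix.diagonal (RCLike.ofReal ∘ hM.1.eigenvalues) = (0 : Matrix n n ℂ) := by
    ext i j
    by_cases hij : i = j <;> simp [Matrix.diagonal, hij, h4 j (Finset.mem_univ j)]
  rw [h6]
  simp

lemma psd_smul' {n : Type*} [Fintype n] {M : Matrix n n ℂ} (hM : M.PosSemidef)
    {c : ℝ} (hc : 0 ≤ c) : ((c : ℂ) • M).PosSemidef := by
  constructor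
  · unfold Matrix.IsHermitian
    rw [conjTranspose_smul, hM.1]
    congr 1
    simp
  · exact (hM.smul (by exact_mod_cast hc : (0:ℂ) ≤ (c:ℂ))).2

open scoped MatrixOrder in
/-- Positive square root (CFC). -/
def psqrt {n : Type*} [Fintype n] [DecidableEq n] (X : Matrix n n ℂ) : Matrix n n ℂ :=
  CFC.sqrt X

open scoped MatrixOrder in
lemma psqrt_herm {n : Type*} [Fintype n] [DecidableEq n] {X : Matrix n n ℂ}
    (_hX : X.PosSemidef) : (psqrt X).IsHermitian :=
  (CFC.sqrt_nonneg X).posSemidef.1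

open scoped MatrixOrder in
lemma psqrt_mul_self {n : Type*} [Fintype n] [DecidableEq n] {X : Matrix n n ℂ}
    (hX : X.PosSemidef) : psqrt X * psqrt X = X :=
  CFC.sqrt_mul_sqrt_self X hX.nonneg

/-- The `(i,j)` block of a bipartite matrix. -/
def blk {r a : Type*} (ρ : Matrix (r × a) (r × a) ℂ) (i j : r) : Matrix a a ℂ :=
  Matrix.of fun s t => ρ (i, s) (j, t)

variable {r a b : Type*} [Fintype r] [Fintype a] [Fintype b]
  [DecidableEq r] [DecidableEq a] [DecidableEq b]

lemma M_eq' (XR : Matrix r r ℂ) (ρ : Matrix (r × a) (r × a) ℂ) :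
    ptraceFst ((XR ⊗ₖ (1 : Matrix a a ℂ)) * ρ) = ∑ k, ∑ i, XR k i • blk ρ i k := by
  ext s t
  simp only [ptraceFst, of_apply, mul_apply, kroneckerMap_apply, one_apply,
    Fintype.sum_prod_type, mul_ite, mul_one, mul_zero, ite_mul, zero_mul,
    Finset.sum_ite_eq, Finset.sum_ite_eq', Finset.mem_univ, if_true,
    Matrix.sum_apply, Matrix.smul_apply, blk, smul_eq_mul]

lemma trace_M' (XR : Matrix r r ℂ) (ρ : Matrix (r × a) (r × a) ℂ) :
    (ptraceFst ((XR ⊗ₖ (1 : Matrix a a ℂ)) * ρ)).trace = (XR * ptraceSnd ρ).trace := by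
  simp only [Matrix.trace, Matrix.diag, ptraceFst, ptraceSnd, of_apply, mul_apply,
    kroneckerMap_apply, one_apply, Fintype.sum_prod_type, mul_ite, mul_one, mul_zero,
    ite_mul, zero_mul, Finset.sum_ite_eq, Finset.sum_ite_eq', Finset.mem_univ, if_true,
    Finset.mul_sum]
  rw [Finset.sum_comm]
  apply Finset.sum_congr rfl
  intro x1 _
  rw [Finset.sum_comm]

lemma trace_key' (N : Matrix a a ℂ →ₗ[ℂ] Matrix b b ℂ) (XR : Matrix r r ℂ)
    (XB : Matrix b b ℂ) (ρ : Matrix (r × a) (r × a) ℂ) :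
    (((XR ⊗ₖ XB) * idTens (⇑N) ρ)).trace
      = (XB * N (∑ k, ∑ i, XR k i • blk ρ i k)).trace := by
  have hR : (XB * N (∑ k, ∑ i, XR k i • blk ρ i k)).trace
      = ∑ k, ∑ i, XR k i * (XB * N (blk ρ i k)).trace := by
    have hN : N (∑ k, ∑ i, XR k i • blk ρ i k) = ∑ k, ∑ i, XR k i • N (blk ρ i k) := by
      rw [map_sum]
      exact Finset.sum_congr rfl fun k _ => by
        rw [map_sum]
        exact Finset.sum_congr rfl fun i _ => N.map_smul _ _
    simp [hN, Matrix.mul_sum, Matrix.mul_smul, Matrix.trace_sum, Matrix.trace_smul,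
      smul_eq_mul]
  rw [hR]
  have hid : ∀ (q p : r × b), idTens (⇑N) ρ q p = N (blk ρ q.1 p.1) q.2 p.2 := fun q p => rfl
  simp only [Matrix.trace, Matrix.diag, mul_apply, kroneckerMap_apply, hid,
    Fintype.sum_prod_type, Finset.mul_sum]
  apply Finset.sum_congr rfl
  intro x _
  rw [Finset.sum_comm]
  apply Finset.sum_congr rfl
  intro x1 _
  apply Finset.sum_congr rfl
  intro y _
  apply Finset.sum_congr rfl
  intro x2 _
  ring

end PolarAux

/-- Tensor-product structure of polar sets: if `X_R` is in the positive polar of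
`𝒜₁ ⊆ 𝒟(R)` and `X_B` is in the positive polar of `𝒩(𝒟(A))`, then `X_R ⊗ X_B` is
in the positive polar of `𝒜₃ = {(id_R ⊗ 𝒩)(ρ_{RA}) : tr_A ρ_{RA} ∈ 𝒜₁}`. -/

theorem polar_tensor {r a b : Type*} [Fintype r] [Fintype a] [Fintype b]
    [DecidableEq r] [DecidableEq a] [DecidableEq b]
    (N : Matrix a a ℂ →ₗ[ℂ] Matrix b b ℂ) (hCP : IsCP ⇑N) (hTP : IsTP ⇑N)
    (A1 : Set (Matrix r r ℂ)) (hA1 : ∀ Y ∈ A1, IsDensity Y)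
    (XR : Matrix r r ℂ) (hXR : XR.PosSemidef)
    (hXR1 : ∀ Y ∈ A1, ((XR * Y).trace).re ≤ 1)
    (XB : Matrix b b ℂ) (hXB : XB.PosSemidef)
    (hXB1 : ∀ ρ : Matrix a a ℂ, IsDensity ρ → ((XB * N ρ).trace).re ≤ 1) :
    ∀ ρRA : Matrix (r × a) (r × a) ℂ, IsDensity ρRA → ptraceSnd ρRA ∈ A1 →
      (((XR ⊗ₖ XB) * idTens (⇑N) ρRA).trace).re ≤ 1 := by
  intro ρRA hρ hmem
  set M : Matrix a a ℂ := ptraceFst ((XR ⊗ₖ (1 : Matrix a a ℂ)) * ρRA) with hMdef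
  have hSherm : (psqrt XR).IsHermitian := psqrt_herm hXR
  have hkH : (psqrt XR ⊗ₖ (1 : Matrix a a ℂ))ᴴ = psqrt XR ⊗ₖ (1 : Matrix a a ℂ) := by
    rw [kron_conjTranspose', hSherm, conjTranspose_one]
  have hMpsd : M.PosSemidef := by
    have h1 : (XR ⊗ₖ (1 : Matrix a a ℂ))
        = (psqrt XR ⊗ₖ (1 : Matrix a a ℂ)) * (psqrt XR ⊗ₖ (1 : Matrix a a ℂ)) := by
      rw [← Matrix.mul_kronecker_mul, psqrt_mul_self hXR, Matrix.one_mul]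
    have h2 : M = ptraceFst ((psqrt XR ⊗ₖ (1 : Matrix a a ℂ)) * ρRA *
        (psqrt XR ⊗ₖ (1 : Matrix a a ℂ))) := by
      rw [hMdef, h1, Matrix.mul_assoc, ptr_comm']
    rw [h2]
    apply ptraceFst_posSemidef'
    have h3 := hρ.1.mul_mul_conjTranspose_same (psqrt XR ⊗ₖ (1 : Matrix a a ℂ))
    rwa [hkH] at h3
  set c := M.trace.re with hcdef
  have hc0 : 0 ≤ c := trace_psd_re_nonneg' hMpsd
  have hcle : c ≤ 1 := by
    have h1 : M.trace = (XR * ptraceSnd ρRA).trace := trace_M' XR ρRA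
    have h2 := congrArg Complex.re h1
    rw [← hcdef] at h2
    rw [h2]
    exact hXR1 _ hmem
  have hkey : (((XR ⊗ₖ XB) * idTens (⇑N) ρRA)).trace = (XB * N M).trace := by
    rw [trace_key' N XR XB ρRA, ← M_eq']
  rw [hkey]
  by_cases hzero : c = 0
  · have hM0 : M = 0 := psd_trace_zero' hMpsd hzero
    rw [hM0, map_zero, Matrix.mul_zero]
    simp
  · have hcpos : 0 < c := lt_of_le_of_ne hc0 (Ne.symm hzero)
    set σ : Matrix a a ℂ := ((c⁻¹ : ℝ) : ℂ) • M with hσdef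
    have hσpsd : σ.PosSemidef := psd_smul' hMpsd (by positivity)
    have htrM : M.trace = (c : ℂ) := trace_psd_real' hMpsd
    have hσtr : σ.trace = 1 := by
      rw [hσdef, Matrix.trace_smul, htrM, smul_eq_mul, ← Complex.ofReal_mul,
        inv_mul_cancel₀ hzero, Complex.ofReal_one]
    have hb := hXB1 σ ⟨hσpsd, hσtr⟩
    have hNσ : (XB * N σ).trace = ((c⁻¹ : ℝ) : ℂ) * (XB * N M).trace := by
      rw [hσdef, N.map_smul, Matrix.mul_smul, Matrix.trace_smul, smul_eq_mul]
    have hre : ((XB * N σ).trace).re = c⁻¹ * ((XB * N M).trace).re := by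
      rw [hNσ]
      simp [Complex.mul_re]
    have hx : ((XB * N M).trace).re = c * ((XB * N σ).trace).re := by
      rw [hre, ← mul_assoc, mul_inv_cancel₀ hzero, one_mul]
    rw [hx]
    calc c * ((XB * N σ).trace).re ≤ c * 1 := mul_le_mul_of_nonneg_left hb hc0
      _ = c := mul_one c
      _ ≤ 1 := hcle


end QIT
end
end
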